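/- arXiv:quant-ph/0308142 — 5 statements merged into one kernel-verified Lean document; each statement's English description precedes it below -/
import Mathlib

section
/- Let d = p be a prime and let u = (j,k) ∈ Z_p × Z_p with u ≠ (0,0). Then the matrices P_u(r) for 0 ≤ r < p form a complete set of mutually orthogonal rank-one projections: (1) P_u(r) · P_u(s) = P_u(r) if r = s and = 0 if r ≠ s; (2) each P_u(r) is Hermitian, (P_u(r))† = P_u(r); (3) Tr P_u(r) = 1; and (4) Σ_{r=0}^{p−1} P_u(r) equals the p×p identity matrix. -/
open Matrix

/-- `eta d = exp(2πi/d)`, the primitive `d`-th root of unity. -/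
noncomputable def eta (d : ℕ) : ℂ := Complex.exp (2 * Real.pi * Complex.I / d)

/-- The generalized spin matrix `S_{j,k}`, with `(S_{j,k})_{m,n} = η^{mj}` if `n = m + k`
(mod `d`) and `0` otherwise, exponents computed with representatives `0 ≤ m, j < d`. -/
noncomputable def spin (d : ℕ) [NeZero d] (j k : ZMod d) :
    Matrix (ZMod d) (ZMod d) ℂ :=
  Matrix.of fun m n => if n = m + k then eta d ^ (m.val * j.val) else 0

/-- The phase `α_u`: `-exp(πi/d)` if `d` is even and both indices are odd, else `1`. -/
noncomputable def alpha (d : ℕ) [NeZero d] (u : ZMod d × ZMod d) : ℂ :=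
  if Even d ∧ Odd u.1.val ∧ Odd u.2.val then -Complex.exp (Real.pi * Complex.I / d) else 1

/-- The projection `P_u(r) = (1/d) Σ_{m=0}^{d-1} (α_u η^r S_u)^m`. -/
noncomputable def proj (d : ℕ) [NeZero d] (u : ZMod d × ZMod d) (r : ZMod d) :
    Matrix (ZMod d) (ZMod d) ℂ :=
  (d : ℂ)⁻¹ • ∑ m ∈ Finset.range d, ((alpha d u * eta d ^ r.val) • spin d u.1 u.2) ^ m

open Matrix Finset

section basics
variable (d : ℕ) [NeZero d]

lemma eta_prim : IsPrimitiveRoot (eta d) d := by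
  simpa [eta] using Complex.isPrimitiveRoot_exp d (NeZero.ne d)

lemma eta_pow_self : eta d ^ d = 1 := (eta_prim d).pow_eq_one

lemma eta_ne_zero : eta d ≠ 0 := Complex.exp_ne_zero _

lemma eta_pow_congr {a b : ℕ} (h : ((a : ZMod d)) = (b : ZMod d)) :
    eta d ^ a = eta d ^ b := by
  rw [ZMod.natCast_eq_natCast_iff] at h
  have ha := Nat.div_add_mod a d
  have hb := Nat.div_add_mod b d
  have : a % d = b % d := h
  calc eta d ^ a = (eta d ^ d) ^ (a / d) * eta d ^ (a % d) := by
        rw [← pow_mul, ← pow_add, ha]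
    _ = (eta d ^ d) ^ (b / d) * eta d ^ (b % d) := by
        rw [eta_pow_self]; simp [this]
    _ = eta d ^ b := by rw [← pow_mul, ← pow_add, hb]

end basics

section basics2
variable (d : ℕ) [NeZero d]

set_option linter.unusedSectionVars false

lemma eta_val_add (a b : ZMod d) :
    eta d ^ (a + b).val = eta d ^ a.val * eta d ^ b.val := by
  rw [← pow_add]
  apply eta_pow_congr
  push_cast [ZMod.natCast_val, ZMod.cast_id]
  ring

lemma conj_eta : (starRingEnd ℂ) (eta d) = (eta d)⁻¹ := by
  rw [eta, ← Complex.exp_conj, ← Complex.exp_neg]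
  congr 1
  have : ((d:ℂ)) ≠ 0 := by exact_mod_cast (NeZero.ne d)
  rw [map_div₀, _root_.map_mul, _root_.map_mul, Complex.conj_I]
  rw [Complex.conj_natCast, Complex.conj_ofReal]
  have h2 : (starRingEnd ℂ) 2 = 2 := map_ofNat _ 2
  rw [h2]
  ring

lemma conj_eta_pow (n : ℕ) : (starRingEnd ℂ) (eta d ^ n) * eta d ^ n = 1 := by
  rw [map_pow, conj_eta, inv_pow, inv_mul_cancel₀ (pow_ne_zero _ (eta_ne_zero d))]

-- sum over ZMod d equals sum over range d
lemma zmod_sum_eq {M : Type*} [AddCommMonoid M] (G : ZMod d → M) :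
    ∑ m ∈ Finset.range d, G (m : ZMod d) = ∑ x : ZMod d, G x := by
  refine Finset.sum_nbij' (fun m => (m : ZMod d)) (fun x => x.val)
    (fun a _ => Finset.mem_univ _) (fun x _ => Finset.mem_range.mpr (ZMod.val_lt x))
    (fun a ha => ZMod.val_cast_of_lt (Finset.mem_range.mp ha))
    (fun x _ => ZMod.natCast_zmod_val x) (fun a _ => rfl)

end basics2

section primechar
variable (p : ℕ) [Fact p.Prime]

lemma sum_eta_char (t : ZMod p) :
    ∑ x : ZMod p, eta p ^ (t * x).val = if t = 0 then (p : ℂ) else 0 := by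
  split
  · subst ‹t = 0›; simp
  · next ht =>
    have : ∑ x : ZMod p, eta p ^ (t * x).val = ∑ x : ZMod p, eta p ^ x.val := by
      apply Fintype.sum_bijective (fun x => t * x)
      · exact (Equiv.mulLeft₀ t ht).bijective
      · intro x; rfl
    rw [this, ← zmod_sum_eq p (fun x => eta p ^ x.val)]
    have : ∑ m ∈ Finset.range p, eta p ^ ((m : ZMod p)).val
        = ∑ m ∈ Finset.range p, eta p ^ m := by
      apply Finset.sum_congr rfl
      intro m hm
      rw [ZMod.val_cast_of_lt (Finset.mem_range.mp hm)]
    rw [this]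
    exact (eta_prim p).geom_sum_eq_zero (Fact.out : p.Prime).one_lt

end primechar

section spinlemmas
variable (d : ℕ) [NeZero d]

set_option linter.unusedSectionVars false

lemma spin_mul_spin (j k j' k' : ZMod d) :
    spin d j k * spin d j' k'
      = eta d ^ (k * j').val • spin d (j + j') (k + k') := by
  ext m n
  rw [Matrix.mul_apply]
  rw [Finset.sum_eq_single (m + k)]
  · simp only [spin, Matrix.of_apply, Matrix.smul_apply, smul_eq_mul, if_pos rfl, if_true,
      ← add_assoc]
    by_cases h : n = m + k + k'
    · rw [if_pos h, if_pos h, ← pow_add, ← pow_add]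
      exact eta_pow_congr d (by push_cast [ZMod.natCast_val, ZMod.cast_id]; ring)
    · rw [if_neg h, if_neg h, mul_zero, mul_zero]
  · intro l _ hl
    simp only [spin, Matrix.of_apply]
    rw [if_neg (fun hc => hl hc), zero_mul]
  · intro h; exact absurd (Finset.mem_univ _) h

lemma spin_zero_zero : spin d 0 0 = 1 := by
  ext m n
  simp only [spin, Matrix.of_apply, add_zero, ZMod.val_zero, mul_zero, pow_zero,
    Matrix.one_apply]
  by_cases h : m = n
  · simp [h]
  · rw [if_neg (fun hc => h hc.symm), if_neg h]

lemma trace_spin_eq_zero (p : ℕ) [Fact p.Prime] (j k : ZMod p) (h : ¬(j = 0 ∧ k = 0)) :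
    Matrix.trace (spin p j k) = 0 := by
  rw [Matrix.trace]
  by_cases hk : k = 0
  · subst hk
    have hj : j ≠ 0 := fun hc => h ⟨hc, rfl⟩
    have : ∀ m : ZMod p, (spin p j 0).diag m = eta p ^ (j * m).val := by
      intro m
      simp only [Matrix.diag, spin, Matrix.of_apply, add_zero, if_pos rfl]
      exact eta_pow_congr p (by push_cast [ZMod.natCast_val, ZMod.cast_id]; ring)
    rw [Finset.sum_congr rfl (fun m _ => this m), sum_eta_char p j, if_neg hj]
  · have : ∀ m : ZMod p, (spin p j k).diag m = 0 := by
      intro m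
      simp only [Matrix.diag, spin, Matrix.of_apply]
      rw [if_neg]
      intro hc
      exact hk (by linear_combination -hc)
    rw [Finset.sum_congr rfl (fun m _ => this m), Finset.sum_const_zero]

lemma spin_conj_mul (j k : ZMod d) : (spin d j k)ᴴ * spin d j k = 1 := by
  ext m n
  rw [Matrix.mul_apply, Matrix.one_apply]
  rw [Finset.sum_eq_single (m - k)]
  · simp only [Matrix.conjTranspose_apply, spin, Matrix.of_apply]
    have h1 : m = m - k + k := by ring
    rw [if_pos h1]
    by_cases h : m = n
    · have h2 : n = m - k + k := by rw [← h]; exact h1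
      rw [if_pos h2, if_pos h, Complex.star_def, conj_eta_pow]
    · have h2 : ¬ n = m - k + k := fun hc => h ((h1.trans hc.symm).symm ▸ rfl)
      rw [if_neg h2, if_neg h, mul_zero]
  · intro l _ hl
    simp only [Matrix.conjTranspose_apply, spin, Matrix.of_apply]
    rw [if_neg (fun hc => hl (by linear_combination -hc)), star_zero, zero_mul]
  · intro h; exact absurd (Finset.mem_univ _) h

end spinlemmas

section spinpow
variable (d : ℕ) [NeZero d]

set_option linter.unusedSectionVars false

lemma spin_pow (j k : ZMod d) (m : ℕ) :
    (spin d j k) ^ m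
      = (∏ t ∈ Finset.range m, eta d ^ ((t • (k * j)).val)) • spin d (m • j) (m • k) := by
  induction m with
  | zero => simp [spin_zero_zero]
  | succ m ih =>
      rw [pow_succ, ih, Matrix.smul_mul, spin_mul_spin, smul_smul,
        Finset.prod_range_succ, succ_nsmul, succ_nsmul, smul_mul_assoc]

lemma eta_prod_eq (a : ZMod d) (m : ℕ) :
    ∏ t ∈ Finset.range m, eta d ^ ((t • a).val) = eta d ^ (m * (m - 1) / 2 * a.val) := by
  rw [Finset.prod_pow_eq_pow_sum]
  apply eta_pow_congr
  push_cast [ZMod.natCast_val, ZMod.cast_id]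
  simp only [nsmul_eq_mul]
  rw [← Finset.sum_mul, ← Nat.cast_sum, Finset.sum_range_id]

end spinpow

section keyunit
variable (p : ℕ) [Fact p.Prime]

lemma alpha_scalar (u : ZMod p × ZMod p) :
    alpha p u ^ p * ∏ t ∈ Finset.range p, eta p ^ ((t • (u.2 * u.1)).val) = 1 := by
  rw [eta_prod_eq]
  rcases Nat.Prime.eq_two_or_odd' (Fact.out : p.Prime) with h2 | hodd
  · subst h2
    -- p = 2
    have heta : eta 2 = -1 := by
      rw [eta]
      norm_num
      rw [show (2 * (Real.pi:ℂ) * Complex.I / 2) = Real.pi * Complex.I by ring]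
      exact Complex.exp_pi_mul_I
    by_cases hb : Odd u.1.val ∧ Odd u.2.val
    · have h1 : u.1 = 1 := by
        have := u.1.val_lt
        have := hb.1
        interval_cases h : u.1.val
        · simp at this
        · have := ZMod.natCast_zmod_val u.1; rw [h] at this; simpa using this.symm
      have h2 : u.2 = 1 := by
        have := u.2.val_lt
        have := hb.2
        interval_cases h : u.2.val
        · simp at this
        · have := ZMod.natCast_zmod_val u.2; rw [h] at this; simpa using this.symm
      rw [alpha, if_pos ⟨even_two, hb⟩, h1, h2]
      norm_num [heta]
      rw [show (ZMod.val (1 : ZMod 2)) = 1 from rfl]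
      rw [← Complex.exp_nat_mul]
      norm_num
      rw [show (2 * ((Real.pi:ℂ) * Complex.I / 2)) = Real.pi * Complex.I by ring]
      rw [Complex.exp_pi_mul_I]
      norm_num
    · have hz : u.2 * u.1 = 0 := by
        rcases not_and_or.mp hb with hb1 | hb1
        · have : u.1 = 0 := by
            have := u.1.val_lt
            rw [Nat.odd_iff] at hb1
            interval_cases h : u.1.val
            · have := ZMod.natCast_zmod_val u.1; rw [h] at this; simpa using this.symm
            · simp at hb1
          rw [this, mul_zero]
        · have : u.2 = 0 := by
            have := u.2.val_lt
            rw [Nat.odd_iff] at hb1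
            interval_cases h : u.2.val
            · have := ZMod.natCast_zmod_val u.2; rw [h] at this; simpa using this.symm
            · simp at hb1
          rw [this, zero_mul]
      rw [alpha, if_neg (by tauto), hz]
      simp
  · -- p odd
    have ha : alpha p u = 1 := by
      rw [alpha, if_neg]
      rintro ⟨he, -⟩
      exact (Nat.not_even_iff_odd.mpr hodd) he
    rw [ha, one_pow, one_mul]
    obtain ⟨c, hc⟩ := hodd
    have h1 : p - 1 = 2 * c := by omega
    have this2 : p * (p - 1) / 2 = p * c := by
      rw [h1, ← mul_assoc, mul_comm p 2, mul_assoc, Nat.mul_div_cancel_left _ (by norm_num)]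
    rw [this2, mul_assoc, pow_mul, eta_pow_self, one_pow]

end keyunit

section projlemmas
variable (p : ℕ) [Fact p.Prime]

lemma pow_period (A : Matrix (ZMod p) (ZMod p) ℂ) (hA : A ^ p = 1) {a b : ℕ}
    (h : (a : ZMod p) = (b : ZMod p)) : A ^ a = A ^ b := by
  have key : ∀ n : ℕ, A ^ n = A ^ (n % p) := by
    intro n
    conv_lhs => rw [← Nat.div_add_mod n p]
    rw [pow_add, pow_mul, hA, one_pow, one_mul]
  have h' : a % p = b % p := (ZMod.natCast_eq_natCast_iff a b p).mp h
  rw [key a, key b, h']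

lemma eps_mul (a b : ZMod p) :
    eta p ^ a.val * eta p ^ b.val = eta p ^ (a + b).val := (eta_val_add p a b).symm

lemma eps_congr {a b : ZMod p} (h : a = b) : eta p ^ a.val = eta p ^ b.val := by rw [h]

/-- heart of orthogonality -/
lemma sum_mul_sum_proj (A : Matrix (ZMod p) (ZMod p) ℂ) (hA : A ^ p = 1) (r s : ZMod p) :
    (∑ x : ZMod p, eta p ^ ((r * x).val) • A ^ x.val)
      * (∑ y : ZMod p, eta p ^ ((s * y).val) • A ^ y.val)
    = if r = s then (p : ℂ) • ∑ x : ZMod p, eta p ^ ((r * x).val) • A ^ x.val else 0 := by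
  rw [Finset.sum_mul_sum]
  have step1 : ∀ x y : ZMod p,
      (eta p ^ ((r * x).val) • A ^ x.val) * (eta p ^ ((s * y).val) • A ^ y.val)
      = (eta p ^ ((r * x).val) * eta p ^ ((s * y).val)) • A ^ ((x + y).val) := by
    intro x y
    rw [Matrix.smul_mul, Matrix.mul_smul, smul_smul]
    congr 1
    rw [← pow_add]
    apply pow_period p A hA
    push_cast [ZMod.natCast_val, ZMod.cast_id]
    ring
  calc ∑ x : ZMod p, ∑ y : ZMod p,
        (eta p ^ ((r * x).val) • A ^ x.val) * (eta p ^ ((s * y).val) • A ^ y.val)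
      = ∑ x : ZMod p, ∑ z : ZMod p,
        (eta p ^ ((r * x).val) * eta p ^ ((s * (z - x)).val)) • A ^ z.val := by
        apply Finset.sum_congr rfl
        intro x _
        rw [Finset.sum_congr rfl (fun y _ => step1 x y)]
        apply Fintype.sum_equiv (Equiv.addLeft x)
        intro y
        simp only [Equiv.coe_addLeft]
        congr 2
        rw [add_sub_cancel_left]
    _ = ∑ z : ZMod p, (∑ x : ZMod p, eta p ^ ((s * z).val) * eta p ^ (((r - s) * x).val))
          • A ^ z.val := by
        rw [Finset.sum_comm]
        apply Finset.sum_congr rfl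
        intro z _
        rw [← Finset.sum_smul]
        congr 1
        apply Finset.sum_congr rfl
        intro x _
        rw [eps_mul, eps_mul]
        exact eps_congr p (by ring)
    _ = ∑ z : ZMod p, ((eta p ^ ((s * z).val)) * if r - s = 0 then (p:ℂ) else 0)
          • A ^ z.val := by
        apply Finset.sum_congr rfl
        intro z _
        rw [← Finset.mul_sum, sum_eta_char p (r - s)]
    _ = if r = s then (p : ℂ) • ∑ x : ZMod p, eta p ^ ((r * x).val) • A ^ x.val else 0 := by
        by_cases h : r = s
        · rw [if_pos h]
          rw [Finset.smul_sum]
          apply Finset.sum_congr rfl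
          intro z _
          rw [if_pos (by rw [h, sub_self]), smul_smul, h, mul_comm]
        · rw [if_neg h]
          rw [Finset.sum_eq_zero]
          intro z _
          rw [if_neg (sub_ne_zero_of_ne h), mul_zero, zero_smul]

end projlemmas

lemma alpha_star (p : ℕ) [NeZero p] (u : ZMod p × ZMod p) :
    star (alpha p u) * alpha p u = 1 := by
  rw [alpha]
  split
  · rw [star_neg, neg_mul_neg, Complex.star_def, ← Complex.exp_conj, ← Complex.exp_add]
    rw [show ((starRingEnd ℂ) (Real.pi * Complex.I / p) + Real.pi * Complex.I / p) = 0 by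
      rw [map_div₀, _root_.map_mul, Complex.conj_I, Complex.conj_ofReal, Complex.conj_natCast]
      ring]
    exact Complex.exp_zero
  · simp

theorem proj_complete_orthogonal (p : ℕ) [Fact p.Prime]
    (u : ZMod p × ZMod p) (hu : u ≠ 0) :
    (∀ r s : ZMod p, proj p u r * proj p u s = if r = s then proj p u r else 0) ∧
    (∀ r : ZMod p, (proj p u r)ᴴ = proj p u r) ∧
    (∀ r : ZMod p, Matrix.trace (proj p u r) = 1) ∧
    (∑ r : ZMod p, proj p u r = 1) := by
  have hp : p.Prime := Fact.out
  have hp0 : p ≠ 0 := hp.ne_zero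
  have hpc : (p : ℂ) ≠ 0 := Nat.cast_ne_zero.mpr hp0
  set A : Matrix (ZMod p) (ZMod p) ℂ := alpha p u • spin p u.1 u.2 with hAdef
  -- A ^ p = 1
  have hA : A ^ p = 1 := by
    rw [hAdef, smul_pow, spin_pow]
    have h0j : p • u.1 = 0 := by rw [nsmul_eq_mul, ZMod.natCast_self, zero_mul]
    have h0k : p • u.2 = 0 := by rw [nsmul_eq_mul, ZMod.natCast_self, zero_mul]
    rw [h0j, h0k, spin_zero_zero, smul_smul, alpha_scalar, one_smul]
  -- proj in ZMod-sum form
  have hproj : ∀ r : ZMod p,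
      proj p u r = (p : ℂ)⁻¹ • ∑ x : ZMod p, eta p ^ ((r * x).val) • A ^ x.val := by
    intro r
    rw [proj]
    congr 1
    rw [← zmod_sum_eq p (fun x => eta p ^ ((r * x).val) • A ^ x.val)]
    apply Finset.sum_congr rfl
    intro m _
    have hsw : (alpha p u * eta p ^ r.val) • spin p u.1 u.2 = eta p ^ r.val • A := by
      rw [hAdef, smul_smul, mul_comm]
    rw [hsw, smul_pow, ← pow_mul]
    congr 1
    · exact eta_pow_congr p (by push_cast [ZMod.natCast_val, ZMod.cast_id]; ring)
    · exact pow_period p A hA (by push_cast [ZMod.natCast_val, ZMod.cast_id]; ring)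
  -- traces of powers vanish
  have htr : ∀ x : ZMod p, x ≠ 0 → Matrix.trace (A ^ x.val) = 0 := by
    intro x hx
    rw [hAdef, smul_pow, spin_pow, smul_smul, Matrix.trace_smul]
    rw [trace_spin_eq_zero p _ _ ?_, smul_zero]
    rintro ⟨h1, h2⟩
    have e1 : x.val • u.1 = x * u.1 := by rw [nsmul_eq_mul, ZMod.natCast_zmod_val]
    have e2 : x.val • u.2 = x * u.2 := by rw [nsmul_eq_mul, ZMod.natCast_zmod_val]
    rw [e1, mul_eq_zero] at h1
    rw [e2, mul_eq_zero] at h2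
    apply hu
    have hu1 : u.1 = 0 := h1.resolve_left hx
    have hu2 : u.2 = 0 := h2.resolve_left hx
    exact Prod.ext hu1 hu2
  refine ⟨?_, ?_, ?_, ?_⟩
  · -- orthogonality
    intro r s
    rw [hproj r, hproj s, Matrix.smul_mul, Matrix.mul_smul, smul_smul,
      sum_mul_sum_proj p A hA r s]
    by_cases h : r = s
    · rw [if_pos h, if_pos h, smul_smul]
      congr 1
      field_simp
    · rw [if_neg h, if_neg h, smul_zero]
  · -- hermitian
    intro r
    have hAHA : Aᴴ * A = 1 := by
      rw [hAdef, Matrix.conjTranspose_smul, Matrix.smul_mul, Matrix.mul_smul, smul_smul,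
        spin_conj_mul, alpha_star, one_smul]
    have hAH : Aᴴ = A ^ (p - 1) := by
      have hp1 : p - 1 + 1 = p := Nat.succ_pred_eq_of_pos hp.pos
      have h2 : A * A ^ (p - 1) = A ^ p := by rw [← pow_succ', hp1]
      calc Aᴴ = Aᴴ * A ^ p := by rw [hA, mul_one]
        _ = Aᴴ * (A * A ^ (p - 1)) := by rw [h2]
        _ = (Aᴴ * A) * A ^ (p - 1) := by rw [mul_assoc]
        _ = A ^ (p - 1) := by rw [hAHA, one_mul]
    rw [hproj r, Matrix.conjTranspose_smul, Matrix.conjTranspose_sum]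
    have hstarc : star ((p : ℂ)⁻¹) = (p : ℂ)⁻¹ := by
      rw [star_inv₀]
      norm_cast
    rw [hstarc]
    congr 1
    have hterm : ∀ x : ZMod p,
        (eta p ^ ((r * x).val) • A ^ x.val)ᴴ
          = eta p ^ ((r * (-x)).val) • A ^ (-x).val := by
      intro x
      rw [Matrix.conjTranspose_smul, Matrix.conjTranspose_pow, hAH, ← pow_mul]
      congr 1
      · -- star of eta power
        have h1 : star (eta p ^ ((r * x).val)) * eta p ^ ((r * x).val) = 1 := by
          rw [Complex.star_def]; exact conj_eta_pow p _
        have h2 : eta p ^ ((r * (-x)).val) * eta p ^ ((r * x).val) = 1 := by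
          rw [eps_mul]
          rw [show r * -x + r * x = 0 by ring, ZMod.val_zero, pow_zero]
        exact mul_right_cancel₀ (pow_ne_zero _ (eta_ne_zero p)) (h1.trans h2.symm)
      · apply pow_period p A hA
        push_cast [ZMod.natCast_val, ZMod.cast_id, Nat.cast_sub hp.one_le]
        rw [CharP.cast_eq_zero (ZMod p) p]
        ring
    rw [Finset.sum_congr rfl (fun x _ => hterm x)]
    apply Fintype.sum_equiv (Equiv.neg (ZMod p))
    intro x
    simp
  · -- trace
    intro r
    rw [hproj r, Matrix.trace_smul, Matrix.trace_sum]
    have : ∀ x : ZMod p,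
        Matrix.trace (eta p ^ ((r * x).val) • A ^ x.val)
          = eta p ^ ((r * x).val) * Matrix.trace (A ^ x.val) := fun x => Matrix.trace_smul _ _
    rw [Finset.sum_congr rfl (fun x _ => this x), Finset.sum_eq_single 0]
    · simp only [mul_zero, ZMod.val_zero, pow_zero, one_mul, Matrix.trace_one, ZMod.card,
        smul_eq_mul]
      field_simp
    · intro x _ hx
      rw [htr x hx, mul_zero]
    · intro h
      exact absurd (Finset.mem_univ _) h
  · -- completeness
    rw [Finset.sum_congr rfl (fun r _ => hproj r), ← Finset.smul_sum, Finset.sum_comm]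
    have hinner : ∀ x : ZMod p,
        ∑ r : ZMod p, eta p ^ ((r * x).val) • A ^ x.val
          = (if x = 0 then (p : ℂ) else 0) • A ^ x.val := by
      intro x
      rw [← Finset.sum_smul]
      congr 1
      rw [← sum_eta_char p x]
      exact Finset.sum_congr rfl (fun r _ => eps_congr p (mul_comm r x))
    rw [Finset.sum_congr rfl (fun x _ => hinner x), Finset.sum_eq_single 0]
    · rw [if_pos rfl, ZMod.val_zero, pow_zero, smul_smul]
      rw [inv_mul_cancel₀ hpc, one_smul]
    · intro x _ hx
      rw [if_neg hx, zero_smul]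
    · intro h
      exact absurd (Finset.mem_univ _) h
end

section
/- Let p be a prime and let a ≠ a' in Z_p. Then for all r, s ∈ Z_p, Tr[P_{(1,a)}(r) · P_{(1,a')}(s)] = 1/p. Moreover, for every a ∈ Z_p and all r, s ∈ Z_p, Tr[P_{(1,a)}(r) · P_{(0,1)}(s)] = 1/p. -/
open Matrix

namespace TraceProjAux

variable (p : ℕ) [Fact p.Prime]

/-- The additive character `x ↦ η^{x.val}`. -/
noncomputable def ch (x : ZMod p) : ℂ := eta p ^ x.val

lemma eta_pow_p : eta p ^ p = 1 := by
  have hp : (p : ℂ) ≠ 0 := Nat.cast_ne_zero.mpr (Fact.out : p.Prime).ne_zero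
  rw [eta, ← Complex.exp_nat_mul]
  have : (p : ℂ) * (2 * Real.pi * Complex.I / p) = 2 * Real.pi * Complex.I := by
    field_simp
  rw [this, Complex.exp_two_pi_mul_I]

lemma eta_pow_mod (a : ℕ) : eta p ^ (a % p) = eta p ^ a := by
  conv_rhs => rw [← Nat.div_add_mod a p]
  rw [pow_add, pow_mul, eta_pow_p, one_pow, one_mul]

variable {p}

lemma ch_add (x y : ZMod p) : ch p (x + y) = ch p x * ch p y := by
  have : NeZero p := ⟨(Fact.out : p.Prime).ne_zero⟩
  rw [ch, ch, ch, ← pow_add, ZMod.val_add, eta_pow_mod]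

lemma ch_zero : ch p 0 = 1 := by
  have : NeZero p := ⟨(Fact.out : p.Prime).ne_zero⟩
  rw [ch, ZMod.val_zero, pow_zero]

lemma eta_ne_one : eta p ≠ 1 := by
  intro h
  rw [eta, Complex.exp_eq_one_iff] at h
  obtain ⟨n, hn⟩ := h
  have hp : (p : ℂ) ≠ 0 := Nat.cast_ne_zero.mpr (Fact.out : p.Prime).ne_zero
  have hI : (2 * (Real.pi : ℂ) * Complex.I) ≠ 0 := by
    simp [Real.pi_ne_zero, Complex.I_ne_zero]
  field_simp at hn
  have h1 : (2 * (Real.pi : ℂ) * Complex.I) * 1 =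
      (2 * (Real.pi : ℂ) * Complex.I) * ((n : ℂ) * (p : ℂ)) := by linear_combination (2 * (Real.pi : ℂ) * Complex.I) * hn
  have h1' : (1 : ℂ) = (n : ℂ) * (p : ℂ) := mul_left_cancel₀ hI h1
  have h2 : ((n * p : ℤ) : ℂ) = 1 := by push_cast; linear_combination -h1'
  have h3 : (n * p : ℤ) = 1 := by exact_mod_cast h2
  have hp2 : 2 ≤ (p : ℤ) := by exact_mod_cast (Fact.out : p.Prime).two_le
  have hd : (p : ℤ) ∣ 1 := ⟨n, by linarith⟩
  have := Int.le_of_dvd one_pos hd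
  omega

lemma ch_one_ne_one : ch p 1 ≠ 1 := by
  have h2 := (Fact.out : p.Prime).two_le
  rw [ch, ZMod.val_one_eq_one_mod]
  rw [Nat.mod_eq_of_lt (by omega), pow_one]
  exact eta_ne_one

lemma sum_ch : ∑ x : ZMod p, ch p x = 0 := by
  have key : ch p 1 * ∑ x : ZMod p, ch p x = ∑ x : ZMod p, ch p x := by
    rw [Finset.mul_sum]
    simp_rw [← ch_add]
    exact Fintype.sum_equiv (Equiv.addLeft (1 : ZMod p)) _ _ (fun x => rfl)
  have := sub_eq_zero.mpr key
  rw [← sub_one_mul] at this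
  rcases mul_eq_zero.mp this with h | h
  · exact absurd (sub_eq_zero.mp h) ch_one_ne_one
  · exact h

variable (p)

/-- `M` has "shape" `(c, t, k)` if `M x y = c · ch(t x)` when `y = x + k` and `0` otherwise. -/
def IsShape (M : Matrix (ZMod p) (ZMod p) ℂ) (c : ℂ) (t k : ZMod p) : Prop :=
  ∀ x y, M x y = if y = x + k then c * ch p (t * x) else 0

variable {p}

lemma shape_spin (j k : ZMod p) :
    haveI : NeZero p := ⟨(Fact.out : p.Prime).ne_zero⟩
    IsShape p (spin p j k) 1 j k := by
  haveI : NeZero p := ⟨(Fact.out : p.Prime).ne_zero⟩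
  intro x y
  rw [spin, Matrix.of_apply]
  congr 1
  rw [one_mul, ch, ZMod.val_mul, eta_pow_mod, mul_comm j.val x.val]

lemma shape_smul {M : Matrix (ZMod p) (ZMod p) ℂ} {c t k} (a : ℂ)
    (h : IsShape p M c t k) : IsShape p (a • M) (a * c) t k := by
  intro x y
  rw [Matrix.smul_apply, h x y]
  split <;> simp [mul_assoc]

lemma shape_mul {M N : Matrix (ZMod p) (ZMod p) ℂ} {c c' t t' k k'}
    (hM : IsShape p M c t k) (hN : IsShape p N c' t' k') :
    IsShape p (M * N) (c * c' * ch p (t' * k)) (t + t') (k + k') := by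
  intro x y
  rw [Matrix.mul_apply]
  rw [Finset.sum_eq_single (x + k)]
  · rw [hM x (x + k), hN (x + k) y, if_pos rfl]
    by_cases hy : y = x + (k + k')
    · rw [if_pos (by rw [hy]; ring), if_pos hy]
      have h1 : t' * (x + k) = t' * x + t' * k := by ring
      have h2 : (t + t') * x = t * x + t' * x := by ring
      rw [h1, ch_add, h2, ch_add]
      ring
    · rw [if_neg (fun hc => hy (by rw [hc]; ring)), if_neg hy, mul_zero]
  · intro z _ hz
    rw [hM x z, if_neg (fun hc => hz hc), zero_mul]
  · intro hc
    exact absurd (Finset.mem_univ _) hc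

lemma shape_one :
    IsShape p (1 : Matrix (ZMod p) (ZMod p) ℂ) 1 0 0 := by
  intro x y
  rw [Matrix.one_apply]
  simp only [add_zero, zero_mul, ch_zero, mul_one]
  by_cases h : y = x
  · rw [if_pos h.symm, if_pos h]
  · rw [if_neg (fun hc => h hc.symm), if_neg h]

lemma shape_congr {M : Matrix (ZMod p) (ZMod p) ℂ} {c c' : ℂ} {t t' k k' : ZMod p}
    (h : IsShape p M c t k) (hc : c = c') (ht : t = t') (hk : k = k') :
    IsShape p M c' t' k' := by
  subst hc; subst ht; subst hk; exact h

lemma shape_pow (c : ℂ) (j k : ZMod p) (m : ℕ) :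
    haveI : NeZero p := ⟨(Fact.out : p.Prime).ne_zero⟩
    ∃ γ : ℂ, IsShape p ((c • spin p j k) ^ m) γ ((m : ZMod p) * j) ((m : ZMod p) * k) := by
  haveI : NeZero p := ⟨(Fact.out : p.Prime).ne_zero⟩
  induction m with
  | zero =>
    refine ⟨1, ?_⟩
    rw [pow_zero]
    exact shape_congr shape_one rfl (by push_cast; ring) (by push_cast; ring)
  | succ n ih =>
    obtain ⟨γ, hγ⟩ := ih
    refine ⟨γ * c * ch p (j * ((n : ZMod p) * k)), ?_⟩
    rw [pow_succ]
    exact shape_congr (shape_mul hγ (shape_smul c (shape_spin j k)))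
      (by ring) (by push_cast; ring) (by push_cast; ring)

lemma trace_shape {M : Matrix (ZMod p) (ZMod p) ℂ} {c : ℂ} {t k : ZMod p}
    (h : IsShape p M c t k) :
    Matrix.trace M = if t = 0 ∧ k = 0 then c * p else 0 := by
  haveI : NeZero p := ⟨(Fact.out : p.Prime).ne_zero⟩
  rw [Matrix.trace]
  simp only [Matrix.diag]
  by_cases hk : k = 0
  · subst hk
    simp only [add_zero]
    have heq : ∀ x : ZMod p, M x x = c * ch p (t * x) := fun x => by
      rw [h x x, if_pos (add_zero x).symm]
    simp_rw [heq]
    by_cases ht : t = 0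
    · subst ht
      simp only [and_true, and_self, eq_self_iff_true, if_true]
      simp only [zero_mul, ch_zero, mul_one, Finset.sum_const, Finset.card_univ,
        ZMod.card, nsmul_eq_mul]
      ring
    · rw [if_neg (fun hc => ht hc.1), ← Finset.mul_sum]
      have hu : Function.Bijective (fun x : ZMod p => t * x) :=
        (Equiv.mulLeft₀ t ht).bijective
      have : ∑ x : ZMod p, ch p (t * x) = ∑ x : ZMod p, ch p x :=
        Fintype.sum_bijective _ hu _ _ (fun x => rfl)
      rw [this, sum_ch, mul_zero]
  · rw [if_neg (fun hc => hk hc.2)]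
    refine Finset.sum_eq_zero (fun x _ => ?_)
    rw [h x x, if_neg (fun hc => hk (by simpa using hc.symm.trans (left_eq_add.mpr rfl)))]
    -- fallback handled below

lemma natCast_eq_zero_of_lt {m : ℕ} (hm : m < p) (h : (m : ZMod p) = 0) : m = 0 := by
  haveI : NeZero p := ⟨(Fact.out : p.Prime).ne_zero⟩
  have hd := (ZMod.natCast_eq_zero_iff m p).mp h
  exact Nat.eq_zero_of_dvd_of_lt hd hm

lemma trace_proj_mul (u v : ZMod p × ZMod p) (r s : ZMod p)
    (h : ∀ m n : ℕ, m < p → n < p →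
      (m : ZMod p) * u.1 + (n : ZMod p) * v.1 = 0 →
      (m : ZMod p) * u.2 + (n : ZMod p) * v.2 = 0 → m = 0 ∧ n = 0) :
    haveI : NeZero p := ⟨(Fact.out : p.Prime).ne_zero⟩
    Matrix.trace (proj p u r * proj p v s) = 1 / p := by
  haveI : NeZero p := ⟨(Fact.out : p.Prime).ne_zero⟩
  have hp : (p : ℂ) ≠ 0 := Nat.cast_ne_zero.mpr (Fact.out : p.Prime).ne_zero
  rw [proj, proj, smul_mul_assoc, mul_smul_comm, Matrix.trace_smul, Matrix.trace_smul,
    Finset.sum_mul_sum]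
  simp only [Matrix.trace_sum]
  have key : ∀ m ∈ Finset.range p, ∀ n ∈ Finset.range p,
      Matrix.trace (((alpha p u * eta p ^ r.val) • spin p u.1 u.2) ^ m *
        ((alpha p v * eta p ^ s.val) • spin p v.1 v.2) ^ n) =
      if m = 0 ∧ n = 0 then (p : ℂ) else 0 := by
    intro m hm n hn
    obtain ⟨γ, hγ⟩ := shape_pow (alpha p u * eta p ^ r.val) u.1 u.2 m
    obtain ⟨δ, hδ⟩ := shape_pow (alpha p v * eta p ^ s.val) v.1 v.2 n
    by_cases hmn : m = 0 ∧ n = 0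
    · obtain ⟨h1, h2⟩ := hmn
      subst h1; subst h2
      simp [Matrix.trace_one, ZMod.card]
    · rw [trace_shape (shape_mul hγ hδ), if_neg hmn, if_neg]
      intro ⟨h1, h2⟩
      exact hmn (h m n (Finset.mem_range.mp hm) (Finset.mem_range.mp hn) h1 h2)
  calc (p:ℂ)⁻¹ • ((p:ℂ)⁻¹ • ∑ m ∈ Finset.range p, ∑ n ∈ Finset.range p,
        Matrix.trace (((alpha p u * eta p ^ r.val) • spin p u.1 u.2) ^ m *
          ((alpha p v * eta p ^ s.val) • spin p v.1 v.2) ^ n))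
      = (p:ℂ)⁻¹ * ((p:ℂ)⁻¹ * ∑ m ∈ Finset.range p, ∑ n ∈ Finset.range p,
          (if m = 0 ∧ n = 0 then (p : ℂ) else 0)) := by
        rw [smul_eq_mul, smul_eq_mul]
        congr 2
        exact Finset.sum_congr rfl (fun m hm => Finset.sum_congr rfl (fun n hn => key m hm n hn))
    _ = 1 / p := by
        have hp0 : 0 < p := (Fact.out : p.Prime).pos
        rw [Finset.sum_eq_single 0]
        · rw [Finset.sum_eq_single 0]
          · rw [if_pos ⟨rfl, rfl⟩]
            field_simp
          · intro n _ hn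
            rw [if_neg (fun hc => hn hc.2)]
          · intro hc
            exact absurd (Finset.mem_range.mpr hp0) hc
        · intro m _ hm
          exact Finset.sum_eq_zero (fun n _ => if_neg (fun hc => hm hc.1))
        · intro hc
          exact absurd (Finset.mem_range.mpr hp0) hc

end TraceProjAux

theorem trace_proj_mul_proj (p : ℕ) [Fact p.Prime] :
    (∀ a a' : ZMod p, a ≠ a' → ∀ r s : ZMod p,
      Matrix.trace (proj p (1, a) r * proj p (1, a') s) = 1 / p) ∧
    (∀ a : ZMod p, ∀ r s : ZMod p,
      Matrix.trace (proj p (1, a) r * proj p (0, 1) s) = 1 / p) := by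
  haveI : NeZero p := ⟨(Fact.out : p.Prime).ne_zero⟩
  constructor
  · intro a a' haa r s
    apply TraceProjAux.trace_proj_mul
    intro m n hm hn h1 h2
    simp only [mul_one] at h1
    have hn' : (n : ZMod p) = -(m : ZMod p) := by linear_combination h1
    rw [hn'] at h2
    have hma : (m : ZMod p) * (a - a') = 0 := by linear_combination h2
    have hm0 : (m : ZMod p) = 0 := by
      rcases mul_eq_zero.mp hma with h | h
      · exact h
      · exact absurd (sub_eq_zero.mp h) haa
    have hmz : m = 0 := TraceProjAux.natCast_eq_zero_of_lt hm hm0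
    have hnz : n = 0 := by
      apply TraceProjAux.natCast_eq_zero_of_lt hn
      rw [hn', hm0, neg_zero]
    exact ⟨hmz, hnz⟩
  · intro a r s
    apply TraceProjAux.trace_proj_mul
    intro m n hm hn h1 h2
    simp only [mul_one, mul_zero, add_zero] at h1
    have hmz : m = 0 := TraceProjAux.natCast_eq_zero_of_lt hm h1
    subst hmz
    simp only [Nat.cast_zero, zero_mul, zero_add, mul_one] at h2
    exact ⟨rfl, TraceProjAux.natCast_eq_zero_of_lt hn h2⟩
end

section
/- For every prime p there exists a complete set of p+1 mutually unbiased orthonormal bases of ℂ^p: there are p+1 orthonormal bases B_0, …, B_p of the Hilbert space ℂ^p such that for any two vectors v ∈ B_r and w ∈ B_s with r ≠ s, |⟨v, w⟩|² = 1/p. -/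
open Finset

noncomputable def mubZeta (p : ℕ) : ℂ := Complex.exp ((Real.pi / p : ℝ) * Complex.I)

lemma mubZeta_ne_zero (p : ℕ) : mubZeta p ≠ 0 := Complex.exp_ne_zero _

lemma mubZeta_abs (p : ℕ) : ‖mubZeta p‖ = 1 := by
  simp [mubZeta, Complex.norm_exp]

lemma mubZeta_abs_zpow (p : ℕ) (n : ℤ) : ‖mubZeta p ^ n‖ = 1 := by
  rw [norm_zpow, mubZeta_abs, one_zpow]

lemma mubZeta_conj_zpow (p : ℕ) (n : ℤ) :
    (starRingEnd ℂ) (mubZeta p ^ n) = mubZeta p ^ (-n) := by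
  rw [map_zpow₀, mubZeta, ← Complex.exp_conj]
  rw [show (starRingEnd ℂ) (((Real.pi / p : ℝ) : ℂ) * Complex.I)
      = -(((Real.pi / p : ℝ) : ℂ) * Complex.I) by simp]
  rw [Complex.exp_neg, inv_zpow, ← zpow_neg]

lemma mubZeta_sq_primitive (p : ℕ) (hp : 0 < p) :
    IsPrimitiveRoot (mubZeta p ^ (2 : ℤ)) p := by
  have h : mubZeta p ^ (2 : ℤ) = Complex.exp (2 * Real.pi * Complex.I / p) := by
    rw [mubZeta, ← Complex.exp_int_mul]
    congr 1
    have : (p : ℂ) ≠ 0 := Nat.cast_ne_zero.mpr hp.ne'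
    push_cast
    field_simp
  rw [h]
  exact Complex.isPrimitiveRoot_exp p hp.ne'

lemma mubZeta_zpow_two_mul (p : ℕ) (hp : 0 < p) (t : ℤ) :
    mubZeta p ^ (2 * (p : ℤ) * t) = 1 := by
  have := (mubZeta_sq_primitive p hp).zpow_eq_one_iff_dvd ((p:ℤ) * t)
  rw [← zpow_mul] at this
  rw [show 2 * (p:ℤ) * t = 2 * ((p:ℤ)*t) by ring]
  exact this.mpr ⟨t, rfl⟩

lemma mubZeta_zpow_congr (p : ℕ) (hp : 0 < p) {a b : ℤ}
    (h : (2 * (p:ℤ)) ∣ (a - b)) : mubZeta p ^ a = mubZeta p ^ b := by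
  obtain ⟨t, ht⟩ := h
  have ha : a = b + 2 * (p:ℤ) * t := by linarith
  rw [ha, zpow_add₀ (mubZeta_ne_zero p), mubZeta_zpow_two_mul p hp, mul_one]

lemma mubZeta_sum (p : ℕ) (hp : 0 < p) (c : ℤ) :
    ∑ k ∈ range p, mubZeta p ^ (2 * c * (k : ℤ))
      = if (p:ℤ) ∣ c then (p : ℂ) else 0 := by
  split_ifs with hdvd
  · obtain ⟨t, ht⟩ := hdvd
    have : ∀ k ∈ range p, mubZeta p ^ (2 * c * (k:ℤ)) = 1 := by
      intro k _
      rw [ht, show 2 * ((p:ℤ)*t) * (k:ℤ) = 2*(p:ℤ)*(t*k) by ring,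
        mubZeta_zpow_two_mul p hp]
    rw [Finset.sum_congr rfl this]
    simp
  · set x : ℂ := mubZeta p ^ ((2 : ℤ) * c) with hx
    have hterm : ∀ k : ℕ, mubZeta p ^ (2 * c * (k:ℤ)) = x ^ k := by
      intro k
      rw [hx, ← zpow_natCast (mubZeta p ^ ((2:ℤ)*c)), ← zpow_mul]
    have hx1 : x ≠ 1 := by
      rw [hx, show (2:ℤ) * c = 2 * c by ring]
      intro h
      have := ((mubZeta_sq_primitive p hp).zpow_eq_one_iff_dvd c).mp
        (by rw [← zpow_mul]; exact h)
      exact hdvd this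
    have hxp : x ^ p = 1 := by
      rw [hx, ← zpow_natCast, ← zpow_mul,
        show (2:ℤ) * c * (p:ℤ) = 2 * (p:ℤ) * c by ring,
        mubZeta_zpow_two_mul p hp]
    rw [Finset.sum_congr rfl (fun k _ => hterm k), geom_sum_eq hx1, hxp]
    simp

lemma mub_gauss (p : ℕ) (hp : p.Prime) {c : ℤ} (hc : ¬ (p:ℤ) ∣ c) (d : ℤ) :
    ‖∑ k ∈ range p, mubZeta p ^ (c * k * (k + p) + 2 * d * k)‖ ^ 2
      = (p : ℝ) := by
  have hp0 : 0 < p := hp.pos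
  set f : ℕ → ℂ := fun k => mubZeta p ^ (c * k * (k + p) + 2 * d * k) with hf
  set T : ℂ := ∑ k ∈ range p, f k with hT
  have hper : ∀ k : ℕ, f (k + p) = f k := by
    intro k
    apply mubZeta_zpow_congr p hp0
    exact ⟨c * (k + p) + d, by push_cast; ring⟩
  have hshift : ∀ l : ℕ, ∑ k ∈ range p, f (l + k) = T := by
    intro l
    induction l with
    | zero => simp [hT]
    | succ n ih =>
      have h1 : ∑ k ∈ range p, f (n + 1 + k) = ∑ k ∈ range p, f (n + (k + 1)) :=
        Finset.sum_congr rfl fun k _ => by rw [show n + 1 + k = n + (k + 1) by omega]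
      have h2 : ∑ k ∈ range (p+1), f (n + k)
          = (∑ k ∈ range p, f (n + (k + 1))) + f (n + 0) := Finset.sum_range_succ' _ p
      have h3 : ∑ k ∈ range (p+1), f (n + k)
          = (∑ k ∈ range p, f (n + k)) + f (n + p) := Finset.sum_range_succ _ p
      have h4 : f (n + p) = f (n + 0) := by rw [hper n]; simp
      rw [h1]
      have := h2.symm.trans h3
      rw [h4] at this
      have h5 : ∑ k ∈ range p, f (n + (k + 1)) = ∑ k ∈ range p, f (n + k) :=
        add_right_cancel this
      rw [h5, ih]
  have key : T * (starRingEnd ℂ) T = (p : ℂ) := by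
    rw [hT, map_sum, Finset.sum_mul_sum]
    have hterm : ∀ l k : ℕ, f k * (starRingEnd ℂ) (f l)
        = mubZeta p ^ ((c * k * (k + p) + 2 * d * k) - (c * l * (l + p) + 2 * d * l)) := by
      intro l k
      rw [hf, mubZeta_conj_zpow, ← zpow_add₀ (mubZeta_ne_zero p), sub_eq_add_neg]
    rw [Finset.sum_comm]
    have hrow : ∀ l ∈ range p, ∑ k ∈ range p, f k * (starRingEnd ℂ) (f l)
        = ∑ k ∈ range p, mubZeta p ^ (2 * (c * l) * (k:ℤ)) * f k := by
      intro l _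
      rw [← Finset.sum_mul, ← hT, ← hshift l, Finset.sum_mul]
      refine Finset.sum_congr rfl fun k _ => ?_
      rw [hterm l (l + k), hf]
      rw [← zpow_add₀ (mubZeta_ne_zero p)]
      congr 1
      push_cast
      ring
    rw [Finset.sum_congr rfl hrow, Finset.sum_comm]
    have hcol : ∀ k ∈ range p, ∑ l ∈ range p, mubZeta p ^ (2 * (c * l) * (k:ℤ)) * f k
        = (if (p:ℤ) ∣ c * k then (p:ℂ) else 0) * f k := by
      intro k _
      rw [← Finset.sum_mul, ← mubZeta_sum p hp0 (c * k)]
      congr 1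
      refine Finset.sum_congr rfl fun l _ => ?_
      congr 1
      ring
    rw [Finset.sum_congr rfl hcol]
    rw [Finset.sum_eq_single_of_mem 0 (Finset.mem_range.mpr hp0)]
    · simp [hf]
    · intro k hk hk0
      have hknd : ¬ (p:ℤ) ∣ (c * k) := by
        intro h
        rcases (Int.Prime.dvd_mul' (by exact_mod_cast hp) h) with h1 | h2
        · exact hc h1
        · have : (p:ℤ) ∣ (k:ℤ) := by exact_mod_cast h2
          have := Int.le_of_dvd (by exact_mod_cast Nat.pos_of_ne_zero hk0) this
          have hklt := Finset.mem_range.mp hk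
          omega
      rw [if_neg hknd, zero_mul]
  have habs : ‖T‖ ^ 2 = Complex.normSq T := Complex.sq_norm T
  have hc2 : ((Complex.normSq T : ℝ) : ℂ) = (p : ℂ) := by rw [← Complex.mul_conj]; exact key
  have h2 : Complex.normSq T = (p : ℝ) := by exact_mod_cast hc2
  rw [habs, h2]

noncomputable def mubVec (p : ℕ) (a b : ℕ) : EuclideanSpace ℂ (Fin p) :=
  WithLp.toLp 2 (fun k : Fin p => ((Real.sqrt p : ℝ) : ℂ)⁻¹ *
    mubZeta p ^ ((a : ℤ) * k * (k + p) + 2 * (b:ℤ) * k))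

lemma inner_mubVec (p : ℕ) (hp : 0 < p) (a b a' b' : ℕ) :
    (inner ℂ (mubVec p a b) (mubVec p a' b') : ℂ)
      = (p : ℂ)⁻¹ * ∑ k ∈ range p,
          mubZeta p ^ (((a':ℤ) * k * (k + p) + 2 * (b':ℤ) * k)
            - ((a:ℤ) * k * (k + p) + 2 * (b:ℤ) * k)) := by
  rw [PiLp.inner_apply, Finset.mul_sum]
  rw [← Fin.sum_univ_eq_sum_range (fun k : ℕ =>
    (p : ℂ)⁻¹ * mubZeta p ^ (((a':ℤ) * k * (k + p) + 2 * (b':ℤ) * k)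
            - ((a:ℤ) * k * (k + p) + 2 * (b:ℤ) * k)))]
  refine Finset.sum_congr rfl fun k _ => ?_
  rw [RCLike.inner_apply, mubVec, mubVec, PiLp.toLp_apply, PiLp.toLp_apply]
  rw [map_mul, mubZeta_conj_zpow, map_inv₀, Complex.conj_ofReal]
  have hsq : (((Real.sqrt p : ℝ) : ℂ))⁻¹ * (((Real.sqrt p : ℝ) : ℂ))⁻¹ = (p:ℂ)⁻¹ := by
    rw [← mul_inv]
    congr 1
    rw [← Complex.ofReal_mul, Real.mul_self_sqrt (by positivity)]
    norm_cast
  rw [mul_mul_mul_comm, hsq, ← zpow_add₀ (mubZeta_ne_zero p), ← sub_eq_add_neg]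

lemma int_dvd_iff_eq (p : ℕ) {b b' : ℕ} (hb : b < p) (hb' : b' < p) :
    (p:ℤ) ∣ ((b':ℤ) - b) ↔ b = b' := by
  constructor
  · intro h
    by_contra hne
    have h1 : ((b':ℤ) - b) ≠ 0 := by omega
    have h2 : (p:ℤ) ≤ |(b':ℤ) - b| := Int.le_of_dvd (abs_pos.2 h1) ((dvd_abs _ _).2 h)
    have h3 : |(b':ℤ) - b| < p := by rw [abs_lt]; omega
    omega
  · intro h; rw [h]; simp

lemma orthonormal_mubVec (p : ℕ) (hp : 0 < p) (a : ℕ) :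
    Orthonormal ℂ (fun b : Fin p => mubVec p a b) := by
  rw [orthonormal_iff_ite]
  intro i j
  rw [inner_mubVec p hp a i a j]
  have hexp : ∀ k : ℕ, ((a:ℤ) * k * (k + p) + 2 * (j:ℤ) * k)
      - ((a:ℤ) * k * (k + p) + 2 * (i:ℤ) * k) = 2 * ((j:ℤ) - i) * k := by
    intro k; ring
  rw [Finset.sum_congr rfl fun k _ => by rw [hexp k]]
  rw [mubZeta_sum p hp ((j:ℤ) - i)]
  simp only [int_dvd_iff_eq p i.isLt j.isLt]
  have hpne : (p : ℂ) ≠ 0 := Nat.cast_ne_zero.mpr hp.ne'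
  split_ifs with h h2 h3
  · exact inv_mul_cancel₀ hpne
  · exact absurd (Fin.ext h) h2
  · exact absurd (congrArg Fin.val h3) h
  · exact mul_zero _

noncomputable def mubONB (p : ℕ) (hp : p.Prime) (a : ℕ) :
    OrthonormalBasis (Fin p) ℂ (EuclideanSpace ℂ (Fin p)) :=
  haveI : Nonempty (Fin p) := ⟨⟨0, hp.pos⟩⟩
  (basisOfLinearIndependentOfCardEqFinrank
    (orthonormal_mubVec p hp.pos a).linearIndependent
    (by simp)).toOrthonormalBasis
    (by rw [coe_basisOfLinearIndependentOfCardEqFinrank]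
        exact orthonormal_mubVec p hp.pos a)

lemma mubONB_apply (p : ℕ) (hp : p.Prime) (a : ℕ) (b : Fin p) :
    mubONB p hp a b = mubVec p a b := by
  haveI : Nonempty (Fin p) := ⟨⟨0, hp.pos⟩⟩
  simp [mubONB, Module.Basis.coe_toOrthonormalBasis,
    coe_basisOfLinearIndependentOfCardEqFinrank]

lemma mubVec_abs_apply (p : ℕ) (hp : 0 < p) (a b : ℕ) (k : Fin p) :
    ‖mubVec p a b k‖ = (Real.sqrt p)⁻¹ := by
  rw [mubVec, PiLp.toLp_apply, norm_mul, mubZeta_abs_zpow, mul_one, norm_inv, Complex.norm_real, Real.norm_eq_abs,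
    abs_of_nonneg (Real.sqrt_nonneg _)]

theorem exists_mub_prime (p : ℕ) (hp : p.Prime) :
    ∃ B : Fin (p + 1) → OrthonormalBasis (Fin p) ℂ (EuclideanSpace ℂ (Fin p)),
      ∀ r s : Fin (p + 1), r ≠ s → ∀ i j : Fin p,
        ‖(inner ℂ (B r i) (B s j) : ℂ)‖ ^ 2 = 1 / p := by
  have hp0 : 0 < p := hp.pos
  have hpR : (p : ℝ) ≠ 0 := Nat.cast_ne_zero.mpr hp0.ne'
  refine ⟨Fin.cons (EuclideanSpace.basisFun (Fin p) ℂ) (fun a : Fin p => mubONB p hp a), ?_⟩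
  have habs_symm : ∀ x y : EuclideanSpace ℂ (Fin p),
      ‖(inner ℂ x y : ℂ)‖ = ‖(inner ℂ y x : ℂ)‖ := by
    intro x y
    rw [← inner_conj_symm, Complex.norm_conj]
  have hsqrtsq : ((Real.sqrt p)⁻¹) ^ 2 = 1 / p := by
    rw [inv_pow, Real.sq_sqrt (by positivity), one_div]
  have hstd : ∀ (a : ℕ) (i j : Fin p),
      ‖(inner ℂ (EuclideanSpace.basisFun (Fin p) ℂ i) (mubVec p a j) : ℂ)‖ ^ 2
        = 1 / p := by
    intro a i j
    have h1 : (inner ℂ (EuclideanSpace.basisFun (Fin p) ℂ i) (mubVec p a j) : ℂ)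
        = mubVec p a j i := by
      rw [EuclideanSpace.basisFun_apply, EuclideanSpace.inner_single_left]
      simp
    rw [h1, mubVec_abs_apply p hp0, hsqrtsq]
  have hexp : ∀ (a a' : Fin p), a ≠ a' → ∀ i j : Fin p,
      ‖(inner ℂ (mubVec p a i) (mubVec p a' j) : ℂ)‖ ^ 2 = 1 / p := by
    intro a a' haa i j
    rw [inner_mubVec p hp0 a i a' j]
    have hre : ∀ k ∈ range p,
        mubZeta p ^ ((((a':ℕ):ℤ) * k * (k + p) + 2 * ((j:ℕ):ℤ) * k)
          - (((a:ℕ):ℤ) * k * (k + p) + 2 * ((i:ℕ):ℤ) * k))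
        = mubZeta p ^ ((((a':ℕ):ℤ) - (a:ℕ)) * k * (k + p)
            + 2 * (((j:ℕ):ℤ) - (i:ℕ)) * k) := by
      intro k _
      congr 1
      ring
    rw [Finset.sum_congr rfl hre]
    have hc : ¬ (p:ℤ) ∣ (((a':ℕ):ℤ) - (a:ℕ)) := by
      intro h
      exact haa (Fin.ext ((int_dvd_iff_eq p a.isLt a'.isLt).mp h))
    rw [norm_mul, mul_pow, mub_gauss p hp hc (((j:ℕ):ℤ) - (i:ℕ))]
    rw [norm_inv, Complex.norm_natCast]
    field_simp
  intro r s hrs i j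
  induction r using Fin.cases with
  | zero =>
    induction s using Fin.cases with
    | zero => exact absurd rfl hrs
    | succ a =>
      rw [Fin.cons_zero, Fin.cons_succ, mubONB_apply]
      exact hstd a i j
  | succ a =>
    induction s using Fin.cases with
    | zero =>
      rw [Fin.cons_succ, Fin.cons_zero, mubONB_apply, habs_symm]
      exact hstd a j i
    | succ a' =>
      rw [Fin.cons_succ, Fin.cons_succ, mubONB_apply, mubONB_apply]
      exact hexp a a' (fun h => hrs (by rw [h])) i j
end

section
/- Let d ≥ 2 and suppose U : {0,…,d} × {0,…,d−1} → M_d(ℂ) is a family of d×d unitary matrices such that: (1) U(c,0) is the identity matrix for every class c; (2) within each class c, the matrices U(c,0), …, U(c,d−1) pairwise commute; (3) the d² matrices consisting of the identity together with all U(c,j) for j ≠ 0 are pairwise orthogonal in the Frobenius inner product, i.e. Tr[U(c,j)† U(c',j')] = 0 whenever (c,j) ≠ (c',j') with j, j' ≠ 0, and Tr[U(c,j)] = 0 for j ≠ 0. Then there exist d+1 orthonormal bases of ℂ^d that are mutually unbiased: any two vectors v, w from different bases satisfy |⟨v, w⟩|² = 1/d. -/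
open Matrix

private lemma commute_conjT {n : Type*} [Fintype n] [DecidableEq n]
    {X Y : Matrix n n ℂ} (h : Commute X Y) (hY : Yᴴ * Y = 1) (hY' : Y * Yᴴ = 1) :
    Commute X Yᴴ := by
  show X * Yᴴ = Yᴴ * X
  calc X * Yᴴ = (Yᴴ * Y) * (X * Yᴴ) := by rw [hY, one_mul]
  _ = Yᴴ * (Y * X) * Yᴴ := by simp only [mul_assoc]
  _ = Yᴴ * (X * Y) * Yᴴ := by rw [← h.eq]
  _ = Yᴴ * X * (Y * Yᴴ) := by simp only [mul_assoc]
  _ = Yᴴ * X := by rw [hY', mul_one]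

theorem mub_of_commuting_orthogonal_unitaries (d : ℕ) [NeZero d] (hd : 2 ≤ d)
    (U : Fin (d + 1) → Fin d → Matrix (Fin d) (Fin d) ℂ)
    (hunitary : ∀ c j, (U c j)ᴴ * U c j = 1 ∧ U c j * (U c j)ᴴ = 1)
    (hid : ∀ c, U c 0 = 1)
    (hcomm : ∀ c j j', Commute (U c j) (U c j'))
    (htraceless : ∀ c j, j ≠ 0 → Matrix.trace (U c j) = 0)
    (horth : ∀ c c' : Fin (d + 1), ∀ j j' : Fin d, j ≠ 0 → j' ≠ 0 →
      (c, j) ≠ (c', j') → Matrix.trace ((U c j)ᴴ * U c' j') = 0) :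
    ∃ B : Fin (d + 1) → OrthonormalBasis (Fin d) ℂ (EuclideanSpace ℂ (Fin d)),
      ∀ r s : Fin (d + 1), r ≠ s → ∀ i j : Fin d,
        ‖(inner ℂ (B r i) (B s j) : ℂ)‖ ^ 2 = 1 / d := by
  classical
  have hdC : (d : ℂ) ≠ 0 := Nat.cast_ne_zero.mpr (NeZero.ne d)
  -- trace pairing
  have tracepair : ∀ c c' j j', Matrix.trace ((U c j)ᴴ * U c' j')
      = if j = 0 ∧ j' = 0 then (d : ℂ) else if c = c' ∧ j = j' then (d : ℂ) else 0 := by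
    intro c c' j j'
    by_cases h0 : j = 0 <;> by_cases h0' : j' = 0
    · subst h0; subst h0'
      rw [hid, hid, if_pos ⟨rfl, rfl⟩]
      simp [Matrix.trace_one]
    · subst h0
      rw [if_neg (by tauto), if_neg (by tauto), hid]
      simp [htraceless c' j' h0']
    · subst h0'
      rw [if_neg (by tauto), if_neg (by tauto), hid]
      rw [mul_one, Matrix.trace_conjTranspose, htraceless c j h0, star_zero]
    · rw [if_neg (by tauto)]
      by_cases he : c = c' ∧ j = j'
      · obtain ⟨rfl, rfl⟩ := he
        rw [if_pos ⟨rfl, rfl⟩, (hunitary c j).1]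
        simp [Matrix.trace_one]
      · rw [if_neg he]
        exact horth c c' j j' h0 h0' (by simp only [ne_eq, Prod.mk.injEq]; tauto)
  have tracepair_same : ∀ c j j', Matrix.trace ((U c j)ᴴ * U c j')
      = if j = j' then (d : ℂ) else 0 := by
    intro c j j'
    rw [tracepair]
    by_cases h : j = j'
    · subst h; by_cases h0 : j = 0 <;> simp [h0]
    · rw [if_neg h, if_neg (by rintro ⟨rfl, rfl⟩; exact h rfl),
        if_neg (by rintro ⟨-, rfl⟩; exact h rfl)]
  -- trace of single U
  have traceU : ∀ c j, Matrix.trace (U c j) = if j = 0 then (d : ℂ) else 0 := by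
    intro c j
    by_cases h0 : j = 0
    · subst h0; simp [hid, Matrix.trace_one]
    · simp [h0, htraceless c j h0]
  -- Step 1 : per class, an orthonormal basis of common eigenvectors
  have key : ∀ c : Fin (d + 1), ∃ B : OrthonormalBasis (Fin d) ℂ (EuclideanSpace ℂ (Fin d)),
      ∀ a j, ∃ μ : ℂ, (U c j) *ᵥ (WithLp.equiv 2 (Fin d → ℂ) (B a))
        = μ • (WithLp.equiv 2 (Fin d → ℂ) (B a)) := by
    intro c
    set A : Fin d → Matrix (Fin d) (Fin d) ℂ := fun j => (1/2 : ℂ) • (U c j + (U c j)ᴴ) with hA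
    set Bm : Fin d → Matrix (Fin d) (Fin d) ℂ :=
      fun j => (Complex.I/2) • ((U c j)ᴴ - U c j) with hBm
    have hcT : ∀ j j', Commute (U c j) (U c j')ᴴ := fun j j' =>
      commute_conjT (hcomm c j j') (hunitary c j').1 (hunitary c j').2
    have hcTT : ∀ j j', Commute (U c j)ᴴ (U c j')ᴴ := by
      intro j j'
      show _ = _
      rw [← conjTranspose_mul, ← conjTranspose_mul, (hcomm c j j').eq]
    have hcTU : ∀ j j', Commute (U c j)ᴴ (U c j') := fun j j' => (hcT j' j).symm
    have bAA : ∀ j j', Commute (U c j + (U c j)ᴴ) (U c j' + (U c j')ᴴ) := fun j j' =>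
      ((hcomm c j j').add_right (hcT j j')).add_left ((hcTU j j').add_right (hcTT j j'))
    have bAB : ∀ j j', Commute (U c j + (U c j)ᴴ) ((U c j')ᴴ - U c j') := fun j j' =>
      ((hcT j j').sub_right (hcomm c j j')).add_left ((hcTT j j').sub_right (hcTU j j'))
    have bBA : ∀ j j', Commute ((U c j)ᴴ - U c j) (U c j' + (U c j')ᴴ) := fun j j' =>
      ((hcTU j j').add_right (hcTT j j')).sub_left ((hcomm c j j').add_right (hcT j j'))
    have bBB : ∀ j j', Commute ((U c j)ᴴ - U c j) ((U c j')ᴴ - U c j') := fun j j' =>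
      ((hcTT j j').sub_right (hcTU j j')).sub_left ((hcT j j').sub_right (hcomm c j j'))
    have hcommAll : ∀ p q : Fin d × Bool,
        Commute (bif p.2 then A p.1 else Bm p.1) (bif q.2 then A q.1 else Bm q.1) := by
      rintro ⟨j, b⟩ ⟨j', b'⟩
      cases b <;> cases b' <;> simp only [cond_true, cond_false, hA, hBm]
      · exact ((bBB j j').smul_left _).smul_right _
      · exact ((bBA j j').smul_left _).smul_right _
      · exact ((bAB j j').smul_left _).smul_right _
      · exact ((bAA j j').smul_left _).smul_right _
    -- Hermitian parts
    have hhermA : ∀ j, (A j).IsHermitian := by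
      intro j
      show (A j)ᴴ = A j
      rw [hA]
      ext i k
      simp only [conjTranspose_apply, Matrix.smul_apply, Matrix.add_apply, smul_eq_mul,
        star_mul', star_add, star_star]
      rw [show star ((1:ℂ)/2) = 1/2 by norm_num]
      ring
    have hhermB : ∀ j, (Bm j).IsHermitian := by
      intro j
      show (Bm j)ᴴ = Bm j
      rw [hBm]
      ext i k
      simp only [conjTranspose_apply, Matrix.smul_apply, Matrix.sub_apply, smul_eq_mul,
        star_mul', star_sub, star_star]
      rw [show star (Complex.I/2) = -(Complex.I/2) by
        simp [Complex.ext_iff]; norm_num]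
      ring
    set T : Fin d × Bool → Module.End ℂ (EuclideanSpace ℂ (Fin d)) :=
      fun p => Matrix.toEuclideanLin (bif p.2 then A p.1 else Bm p.1) with hT
    have hsym : ∀ p, (T p).IsSymmetric := by
      rintro ⟨j, b⟩
      cases b
      · exact Matrix.isHermitian_iff_isSymmetric.mp (hhermB j)
      · exact Matrix.isHermitian_iff_isSymmetric.mp (hhermA j)
    have hmulE : ∀ X Y : Matrix (Fin d) (Fin d) ℂ,
        Matrix.toEuclideanLin (X * Y)
          = (Matrix.toEuclideanLin X) ∘ₗ (Matrix.toEuclideanLin Y) := by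
      intro X Y
      rw [Matrix.toEuclideanLin_eq_toLin,
        Matrix.toLin_mul (PiLp.basisFun 2 ℂ (Fin d)) (PiLp.basisFun 2 ℂ (Fin d))
          (PiLp.basisFun 2 ℂ (Fin d))]
    have hpair : Pairwise (Function.onFun Commute T) := by
      intro p q _
      show T p * T q = T q * T p
      rw [Module.End.mul_eq_comp, Module.End.mul_eq_comp, hT]
      simp only
      rw [← hmulE, ← hmulE, (hcommAll p q).eq]
    have internal := LinearMap.IsSymmetric.LinearMap.IsSymmetric.directSum_isInternal_of_pairwise_commute hsym hpair
    have orth := LinearMap.IsSymmetric.orthogonalFamily_iInf_eigenspaces hsym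
    set V : ((Fin d × Bool) → ℂ) → Submodule ℂ (EuclideanSpace ℂ (Fin d)) :=
      fun χ => ⨅ p, Module.End.eigenspace (T p) (χ p) with hVdef
    set bb := internal.collectedBasis (fun χ => (stdOrthonormalBasis ℂ (V χ)).toBasis) with hbb
    haveI : Fintype ((χ : (Fin d × Bool) → ℂ) × Fin (Module.finrank ℂ (V χ))) :=
      FiniteDimensional.fintypeBasisIndex bb
    have horthn : Orthonormal ℂ bb := by
      rw [hbb]
      exact DirectSum.IsInternal.collectedBasis_orthonormal orth internal
        (fun χ => by simpa using (stdOrthonormalBasis ℂ (V χ)).orthonormal)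
    set w := bb.toOrthonormalBasis horthn with hw
    have hcard : Fintype.card ((χ : (Fin d × Bool) → ℂ) × Fin (Module.finrank ℂ (V χ))) = d := by
      rw [← Module.finrank_eq_card_basis bb, finrank_euclideanSpace_fin]
    set e := Fintype.equivFinOfCardEq hcard with he
    set Bc := w.reindex e with hBc
    refine ⟨Bc, ?_⟩
    intro a j
    set χ := (e.symm a).1 with hχ
    have hmem : Bc a ∈ V χ := by
      rw [hBc, OrthonormalBasis.reindex_apply, hw]
      rw [show ⇑(bb.toOrthonormalBasis horthn) = ⇑bb from Module.Basis.coe_toOrthonormalBasis bb horthn]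
      rw [hbb, internal.collectedBasis_coe (fun χ => (stdOrthonormalBasis ℂ (V χ)).toBasis)]
      exact Submodule.coe_mem _
    rw [hVdef] at hmem
    have heig : ∀ p, T p (Bc a) = χ p • Bc a := fun p =>
      Module.End.mem_eigenspace_iff.mp ((Submodule.mem_iInf _).mp hmem p)
    have hudecomp : U c j = A j + Complex.I • Bm j := by
      rw [hA, hBm, smul_smul]
      rw [show Complex.I * (Complex.I / 2) = -(1/2 : ℂ) by
        rw [← mul_div_assoc, Complex.I_mul_I]; norm_num]
      module
    have hlin : Matrix.toEuclideanLin (U c j) (Bc a)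
        = (χ (j, true) + Complex.I * χ (j, false)) • Bc a := by
      have h1 : Matrix.toEuclideanLin (A j) (Bc a) = χ (j, true) • Bc a := heig (j, true)
      have h2 : Matrix.toEuclideanLin (Bm j) (Bc a) = χ (j, false) • Bc a := heig (j, false)
      obtain ⟨X, hX⟩ : ∃ X, X = A j := ⟨_, rfl⟩
      obtain ⟨Y, hY⟩ : ∃ Y, Y = Bm j := ⟨_, rfl⟩
      rw [← hX] at h1
      rw [← hY] at h2
      rw [hudecomp, ← hX, ← hY, _root_.map_add, _root_.map_smul, LinearMap.add_apply,
        LinearMap.smul_apply, h1, h2, smul_smul, add_smul]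
    refine ⟨χ (j, true) + Complex.I * χ (j, false), ?_⟩
    have := congrArg (WithLp.equiv 2 (Fin d → ℂ)) hlin
    simpa using this
  choose B hB using key
  -- Step 2 : eigenprojectors
  set v : Fin (d + 1) → Fin d → (Fin d → ℂ) :=
    fun c a => WithLp.equiv 2 (Fin d → ℂ) (B c a) with hv
  set P : Fin (d + 1) → Fin d → Matrix (Fin d) (Fin d) ℂ :=
    fun c a => vecMulVec (v c a) (star (v c a)) with hP
  have innerdot : ∀ c a b, (inner ℂ (B c a) (B c b) : ℂ) = star (v c a) ⬝ᵥ v c b := by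
    intro c a b
    simp [hv, PiLp.inner_apply, dotProduct, mul_comm]
  have innerdot2 : ∀ c c' a b, (inner ℂ (B c a) (B c' b) : ℂ) = star (v c a) ⬝ᵥ v c' b := by
    intro c c' a b
    simp [hv, PiLp.inner_apply, dotProduct, mul_comm]
  have honb : ∀ c a b, star (v c a) ⬝ᵥ v c b = if a = b then 1 else 0 := by
    intro c a b
    rw [← innerdot]
    exact orthonormal_iff_ite.mp (B c).orthonormal a b
  have htrP : ∀ c a, Matrix.trace (P c a) = 1 := by
    intro c a
    have : Matrix.trace (P c a) = star (v c a) ⬝ᵥ v c a := by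
      simp [hP, Matrix.trace, Matrix.diag, vecMulVec_apply, dotProduct, mul_comm]
    rw [this, honb, if_pos rfl]
  have hsumP : ∀ c, ∑ a, P c a = 1 := by
    intro c
    ext i k
    have hs := (B c).sum_inner_mul_inner (EuclideanSpace.single i (1:ℂ))
      (EuclideanSpace.single k (1:ℂ))
    simp only [EuclideanSpace.inner_single_left, EuclideanSpace.inner_single_right,
      _root_.map_one, one_mul] at hs
    simpa [hP, Matrix.sum_apply, vecMulVec_apply, hv, Matrix.one_apply,
      EuclideanSpace.single_apply, mul_comm, eq_comm] using hs
  have hUP : ∀ c j a, ∃ μ : ℂ, U c j * P c a = μ • P c a := by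
    intro c j a
    obtain ⟨μ, hμ⟩ := hB c a j
    refine ⟨μ, ?_⟩
    ext i k
    have h1 : ((U c j) *ᵥ v c a) i = μ * v c a i := congrFun hμ i
    simp only [hP, Matrix.mul_apply, vecMulVec_apply, Matrix.smul_apply, smul_eq_mul]
    calc ∑ l, U c j i l * (v c a l * star (v c a) k)
        = (∑ l, U c j i l * v c a l) * star (v c a) k := by
          rw [Finset.sum_mul]; exact Finset.sum_congr rfl fun l _ => by ring
      _ = μ * (v c a i * star (v c a) k) := by
          rw [show (∑ l, U c j i l * v c a l) = ((U c j) *ᵥ v c a) i from rfl, h1]; ring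
  have hUspan : ∀ c j, U c j ∈ Submodule.span ℂ (Set.range (P c)) := by
    intro c j
    have : U c j = ∑ a, U c j * P c a := by
      rw [← Finset.mul_sum, hsumP, mul_one]
    rw [this]
    refine Submodule.sum_mem _ fun a _ => ?_
    obtain ⟨μ, h⟩ := hUP c j a
    rw [h]
    exact Submodule.smul_mem _ _ (Submodule.subset_span ⟨a, rfl⟩)
  have hli : ∀ c, LinearIndependent ℂ (U c) := by
    intro c
    rw [linearIndependent_iff']
    intro s g hsum i hi
    have h := congrArg (fun M => Matrix.trace ((U c i)ᴴ * M)) hsum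
    simp only [Finset.mul_sum, Matrix.mul_smul, Matrix.trace_sum, Matrix.trace_smul,
      smul_eq_mul, mul_zero, Matrix.trace_zero] at h
    have h2 : ∑ j ∈ s, g j * Matrix.trace ((U c i)ᴴ * U c j) = g i * d := by
      rw [Finset.sum_congr rfl (fun j _ => by rw [tracepair_same c i j])]
      simp only [mul_ite, mul_zero]
      rw [Finset.sum_ite_eq s i (fun j => g j * d), if_pos hi]
    rw [h2] at h
    exact (mul_eq_zero.mp h).resolve_right hdC
  have hspanEq : ∀ c, Submodule.span ℂ (Set.range (U c)) = Submodule.span ℂ (Set.range (P c)) := by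
    intro c
    refine Submodule.eq_of_le_of_finrank_le (Submodule.span_le.mpr ?_) ?_
    · rintro x ⟨j, rfl⟩; exact hUspan c j
    · have h1 : Module.finrank ℂ (Submodule.span ℂ (Set.range (U c))) = d := by
        rw [finrank_span_eq_card (hli c)]; simp
      have h2 : Module.finrank ℂ (Submodule.span ℂ (Set.range (P c))) ≤ d := by
        simpa [Set.finrank] using finrank_range_le_card (P c)
      omega
  have hexpand : ∀ c a, ∃ α : Fin d → ℂ, (∑ j, α j • U c j) = P c a ∧ α 0 = 1 / d := by
    intro c a
    have hmem : P c a ∈ Submodule.span ℂ (Set.range (U c)) := by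
      rw [hspanEq c]; exact Submodule.subset_span ⟨a, rfl⟩
    obtain ⟨α, hα⟩ := (Submodule.mem_span_range_iff_exists_fun ℂ).mp hmem
    refine ⟨α, hα, ?_⟩
    have h := congrArg Matrix.trace hα
    rw [Matrix.trace_sum, htrP c a] at h
    have h2 : ∑ j, Matrix.trace (α j • U c j) = α 0 * d := by
      rw [Finset.sum_congr rfl (fun j _ => by rw [Matrix.trace_smul, smul_eq_mul, traceU])]
      simp only [mul_ite, mul_zero]
      rw [Finset.sum_ite_eq' Finset.univ (0 : Fin d) (fun j => α j * d), if_pos (Finset.mem_univ _)]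
    rw [h2] at h
    rw [eq_div_iff hdC]
    exact h
  have hPH : ∀ c a, (P c a)ᴴ = P c a := by
    intro c a
    ext i k
    simp [hP, vecMulVec_apply, conjTranspose_apply, mul_comm]
  -- final assembly
  refine ⟨B, ?_⟩
  intro r s hrs i j
  obtain ⟨α, hα, hα0⟩ := hexpand r i
  obtain ⟨β, hβ, hβ0⟩ := hexpand s j
  -- trace two ways
  have wayA : Matrix.trace ((P r i)ᴴ * P s j)
      = (star (v r i) ⬝ᵥ v s j) * (star (v s j) ⬝ᵥ v r i) := by
    rw [hPH]
    calc Matrix.trace (P r i * P s j)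
        = ∑ x, ∑ k, (v r i x * star (v r i) k) * (v s j k * star (v s j) x) := by
          simp [hP, Matrix.trace, Matrix.diag, Matrix.mul_apply, vecMulVec_apply]
      _ = ∑ k, ∑ x, (v r i x * star (v r i) k) * (v s j k * star (v s j) x) :=
          Finset.sum_comm
      _ = (∑ k, star (v r i) k * v s j k) * (∑ x, star (v s j) x * v r i x) := by
          rw [Finset.sum_mul_sum]
          exact Finset.sum_congr rfl fun k _ => Finset.sum_congr rfl fun x _ => by ring
      _ = (star (v r i) ⬝ᵥ v s j) * (star (v s j) ⬝ᵥ v r i) := rfl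
  have wayB : Matrix.trace ((P r i)ᴴ * P s j) = 1 / d := by
    rw [← hα, ← hβ]
    rw [Matrix.conjTranspose_sum]
    simp only [Matrix.conjTranspose_smul]
    rw [Finset.sum_mul_sum]
    simp only [Matrix.trace_sum]
    have hterm : ∀ j' : Fin d, ∑ k : Fin d,
        Matrix.trace ((star (α j') • (U r j')ᴴ) * (β k • U s k))
        = if j' = 0 then star (α 0) * β 0 * d else 0 := by
      intro j'
      have : ∀ k : Fin d, Matrix.trace ((star (α j') • (U r j')ᴴ) * (β k • U s k))
          = star (α j') * β k * (if j' = 0 ∧ k = 0 then (d : ℂ) else 0) := by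
        intro k
        have ht : Matrix.trace ((U r j')ᴴ * U s k) = if j' = 0 ∧ k = 0 then (d : ℂ) else 0 := by
          rw [tracepair r s j' k, if_neg (show ¬(r = s ∧ j' = k) from fun h => hrs h.1)]
        rw [Matrix.smul_mul, Matrix.mul_smul, Matrix.trace_smul, Matrix.trace_smul, ht]
        simp only [smul_eq_mul]; ring
      rw [Finset.sum_congr rfl fun k _ => this k]
      by_cases h0 : j' = 0
      · subst h0
        simp only [eq_self_iff_true, true_and, if_true]
        rw [Finset.sum_congr rfl (fun k _ =>
          show (star (α 0) * β k * if k = 0 then (d:ℂ) else 0)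
              = (if k = 0 then star (α 0) * β k * d else 0) by split_ifs <;> ring)]
        rw [Finset.sum_ite_eq' Finset.univ (0 : Fin d) (fun k => star (α 0) * β k * d),
          if_pos (Finset.mem_univ _)]
      · simp [h0]
    rw [Finset.sum_congr rfl fun j' _ => hterm j']
    rw [Finset.sum_ite_eq' Finset.univ (0 : Fin d) (fun _ => star (α 0) * β 0 * d),
      if_pos (Finset.mem_univ _)]
    rw [hα0, hβ0]
    rw [show star ((1:ℂ)/d) = 1/d by simp [Complex.star_def, map_div₀]]
    field_simp
  -- conclude
  have hz : (inner ℂ (B r i) (B s j) : ℂ) * (starRingEnd ℂ) (inner ℂ (B r i) (B s j) : ℂ)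
      = 1 / d := by
    rw [← wayB, wayA, innerdot2]
    congr 1
    rw [← innerdot2 s r j i]
    rw [← innerdot2 r s i j]
    exact inner_conj_symm ((B s) j) ((B r) i)
  rw [Complex.mul_conj] at hz
  have : Complex.normSq (inner ℂ (B r i) (B s j) : ℂ) = 1 / (d : ℝ) := by
    have := congrArg Complex.re hz
    simpa using this
  rw [Complex.sq_norm]
  rw [this]
end

section
/- Let p be a prime and n ≥ 1, and let F = GF(p^n) be the finite field with p^n elements, regarded as an algebra over Z_p. Then there exists a Z_p-linear bijection M : F × F → Z_p^{2n} such that for all u₁, u₂ ∈ F × F, σ(M(u₁), M(u₂)) = Tr_{F/Z_p}(u₁ ∘ u₂), where Tr_{F/Z_p} is the field trace of F over Z_p. -/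
theorem exists_symplectic_linear_bijection (p n : ℕ) [Fact p.Prime] (hn : 1 ≤ n)
    (F : Type*) [Field F] [Fintype F] [Algebra (ZMod p) F]
    (hF : Fintype.card F = p ^ n) :
    ∃ M : (F × F) ≃ₗ[ZMod p] (Fin n → ZMod p × ZMod p),
      ∀ u₁ u₂ : F × F,
        (∑ j : Fin n, ((M u₁ j).2 * (M u₂ j).1 - (M u₁ j).1 * (M u₂ j).2)) =
          Algebra.trace (ZMod p) F (u₁.2 * u₂.1 - u₁.1 * u₂.2) := by
  have hp : 1 < p := (Fact.out : p.Prime).one_lt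
  haveI : FiniteDimensional (ZMod p) F := Module.Finite.of_finite
  have hrank : Module.finrank (ZMod p) F = n := by
    have := Module.card_eq_pow_finrank (K := ZMod p) (V := F)
    rw [ZMod.card, hF] at this
    exact (Nat.pow_right_injective hp this.symm)
  haveI : Algebra.IsSeparable (ZMod p) F := by infer_instance
  set B := Algebra.traceForm (ZMod p) F with hB
  have hBnd : B.Nondegenerate := traceForm_nondegenerate (ZMod p) F
  -- basis and trace-dual basis
  let b : Module.Basis (Fin n) (ZMod p) F := (Module.finBasis (ZMod p) F).reindex (finCongr hrank)
  let c : Module.Basis (Fin n) (ZMod p) F := B.dualBasis hBnd b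
  -- linear equiv
  let e : (F × F) ≃ₗ[ZMod p] ((Fin n → ZMod p) × (Fin n → ZMod p)) :=
    b.equivFun.prodCongr c.equivFun
  let g : ((Fin n → ZMod p) × (Fin n → ZMod p)) ≃ₗ[ZMod p] (Fin n → ZMod p × ZMod p) :=
    { toFun := fun f j => (f.1 j, f.2 j)
      invFun := fun f => (fun j => (f j).1, fun j => (f j).2)
      map_add' := fun _ _ => rfl
      map_smul' := fun _ _ => rfl
      left_inv := fun _ => rfl
      right_inv := fun _ => rfl }
  refine ⟨e.trans g, fun u₁ u₂ => ?_⟩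
  have key : ∀ x y : F, ∑ j : Fin n, c.repr x j * b.repr y j =
      Algebra.trace (ZMod p) F (x * y) := by
    intro x y
    have : ∀ j, c.repr x j = B x (b j) := fun j =>
      LinearMap.BilinForm.dualBasis_repr_apply (B := B) hBnd b x j
    simp_rw [this]
    calc ∑ j : Fin n, B x (b j) * b.repr y j
        = ∑ j : Fin n, B x (b.repr y j • b j) := by
          simp [LinearMap.BilinForm.smul_right, mul_comm]
      _ = B x (∑ j : Fin n, b.repr y j • b j) := by rw [map_sum]
      _ = B x y := by rw [b.sum_repr y]
      _ = Algebra.trace (ZMod p) F (x * y) := rfl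
  have h1 := key u₁.2 u₂.1
  have h2 := key u₂.2 u₁.1
  have h2' : ∑ j : Fin n, b.repr u₁.1 j * c.repr u₂.2 j
      = Algebra.trace (ZMod p) F (u₁.1 * u₂.2) := by
    rw [show u₁.1 * u₂.2 = u₂.2 * u₁.1 from mul_comm _ _, ← h2]
    exact Finset.sum_congr rfl fun j _ => mul_comm _ _
  simp only [map_sub, Finset.sum_sub_distrib]
  rw [← h1, ← h2']
  rfl
end
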